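/- Let p be an odd prime and m a divisor of p−1. Then every unit u ∈ (ℤ/mℤ)^× can be written as u ≡ ±(t² + s²) (mod m) for some integers t, s with gcd(t² + p²s², 6mp) = 1. Conversely every residue ±(t² + s²) mod m with gcd(t² + p²s², 6mp) = 1 is a unit modulo m. That is, (ℤ/mℤ)^× = { ±(t² + s²) mod m : t, s ∈ ℤ, gcd(t² + p²s², 6mp) = 1 }. -/

import Mathlib

lemma aux_isUnit_intCast_zmod_iff {n : ℕ} [NeZero n] (a : ℤ) :
    IsUnit ((a : ZMod n)) ↔ Int.gcd a n = 1 := by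
  rcases Int.natAbs_eq a with h | h
  · rw [Int.gcd, Int.natAbs_natCast]
    conv_lhs => rw [h]
    rw [Int.cast_natCast]
    exact ZMod.isUnit_iff_coprime a.natAbs n
  · rw [Int.gcd, Int.natAbs_natCast]
    conv_lhs => rw [h]
    rw [Int.cast_neg, Int.cast_natCast, IsUnit.neg_iff]
    exact ZMod.isUnit_iff_coprime a.natAbs n

lemma aux_key4 : ∀ a b : ZMod 4, (b = 0 ∨ b = 2 → a = 1 ∨ a = 3) →
    ∃ k : ZMod 4, a + k * b = 1 ∨ -a + k * b = 1 := by decide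

lemma aux_lift (m u₀ : ℕ) (h : Nat.Coprime u₀ m) :
    ∃ e : ℤ, ((e : ZMod 4) = 1) ∧
      (((e : ZMod m) = (u₀ : ZMod m)) ∨ ((e : ZMod m) = -(u₀ : ZMod m))) := by
  have hcond : ((m : ZMod 4) = 0 ∨ (m : ZMod 4) = 2) →
      ((u₀ : ZMod 4) = 1 ∨ (u₀ : ZMod 4) = 3) := by
    intro hb
    have hm2 : ((m : ZMod 2)) = 0 := by
      rw [← map_natCast (ZMod.castHom (show (2:ℕ) ∣ 4 by norm_num) (ZMod 2)) m]
      rcases hb with hb | hb <;> rw [hb] <;> decide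
    have hme : 2 ∣ m := (ZMod.natCast_eq_zero_iff m 2).mp hm2
    have hu : ¬ 2 ∣ u₀ := by
      intro h2u
      have := Nat.dvd_gcd h2u hme
      rw [h] at this
      omega
    have h14 : u₀ % 4 = 1 ∨ u₀ % 4 = 3 := by omega
    rcases h14 with h1 | h1
    · left; rw [← ZMod.natCast_mod u₀ 4, h1]; norm_num
    · right; rw [← ZMod.natCast_mod u₀ 4, h1]; norm_num
  obtain ⟨k, hk⟩ := aux_key4 (u₀ : ZMod 4) (m : ZMod 4) hcond
  have hkv : ((k.val : ℕ) : ZMod 4) = k := by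
    simp [ZMod.natCast_val, ZMod.cast_id]
  rcases hk with hk | hk
  · refine ⟨(u₀ : ℤ) + (k.val : ℤ) * m, ?_, Or.inl ?_⟩
    · push_cast
      rw [hkv]; exact hk
    · push_cast
      simp [ZMod.natCast_self]
  · refine ⟨-(u₀ : ℤ) + (k.val : ℤ) * m, ?_, Or.inr ?_⟩
    · push_cast
      rw [hkv]; exact hk
    · push_cast
      simp [ZMod.natCast_self]

theorem units_as_sums_of_two_squares (p m : ℕ) (hp : p.Prime) (hodd : Odd p)
    (hm : m ∣ p - 1) :
    {u : ZMod m | IsUnit u} =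
      {x : ZMod m | ∃ t s : ℤ, Int.gcd (t ^ 2 + (p : ℤ) ^ 2 * s ^ 2) (6 * m * p) = 1 ∧
        (x = ((t ^ 2 + s ^ 2 : ℤ) : ZMod m) ∨ x = -((t ^ 2 + s ^ 2 : ℤ) : ZMod m))} := by
  have hp2 : p ≠ 2 := by rintro rfl; exact (by norm_num : ¬ Odd 2) hodd
  have hp3 : 3 ≤ p := by have := hp.two_le; omega
  have hm0 : m ≠ 0 := by rintro rfl; rw [Nat.zero_dvd] at hm; omega
  haveI : NeZero m := ⟨hm0⟩
  have hmlt : m < p := by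
    have := Nat.le_of_dvd (by omega) hm
    omega
  have hpm1 : (p : ZMod m) = 1 := by
    obtain ⟨k, hk⟩ := hm
    have hpk : p = m * k + 1 := by omega
    rw [hpk]
    push_cast
    simp [ZMod.natCast_self]
  ext x
  simp only [Set.mem_setOf_eq]
  constructor
  · -- forward direction
    intro hx
    haveI : Fact p.Prime := ⟨hp⟩
    have hcop_u : Nat.Coprime x.val m := ZMod.val_coe_unit_coprime hx.unit
    obtain ⟨e, he4, hem⟩ := aux_lift m x.val hcop_u
    have hxu : ((x.val : ℕ) : ZMod m) = x := by
      simp [ZMod.natCast_val, ZMod.cast_id]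
    -- a nonsquare mod p
    obtain ⟨c, hc⟩ := FiniteField.exists_nonsquare (F := ZMod p)
      (by rw [ZMod.ringChar_zmod_n]; exact hp2)
    have hc0 : c ≠ 0 := by rintro rfl; exact hc ⟨0, by ring⟩
    have hcu : IsUnit c := hc0.isUnit
    -- CRT setup
    have hcop4m : Nat.Coprime (4 * m) p := by
      rw [Nat.coprime_comm]
      refine (hp.coprime_iff_not_dvd).mpr ?_
      intro hd
      rcases (Nat.Prime.dvd_mul hp).mp hd with h4 | hmm
      · have hle := Nat.le_of_dvd (by norm_num) h4
        have hodd' := Nat.odd_iff.mp hodd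
        have hp3' : p = 3 := by omega
        subst hp3'
        norm_num at h4
      · have := Nat.le_of_dvd (by omega) hmm
        omega
    haveI : NeZero (4 * m * p) := ⟨by positivity⟩
    set φ := ZMod.chineseRemainder hcop4m with hφ
    set b : ZMod (4 * m) := ((e : ZMod (4 * m))) with hb
    have hbu : IsUnit b := by
      rw [hb, aux_isUnit_intCast_zmod_iff]
      have g4 : e.natAbs.Coprime 4 := by
        have h1 : Int.gcd e ((4:ℕ):ℤ) = 1 :=
          (aux_isUnit_intCast_zmod_iff (n := 4) e).mp (by rw [he4]; exact isUnit_one)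
        simpa [Int.gcd] using h1
      have gm : e.natAbs.Coprime m := by
        have h1 : Int.gcd e ((m:ℕ):ℤ) = 1 := by
          refine (aux_isUnit_intCast_zmod_iff (n := m) e).mp ?_
          rcases hem with h | h
          · rw [h, hxu]; exact hx
          · rw [h, IsUnit.neg_iff, hxu]; exact hx
        simpa [Int.gcd] using h1
      have := Nat.Coprime.mul_right g4 gm
      simpa [Int.gcd, Int.natAbs_mul] using this
    have hABu : IsUnit ((b, c) : ZMod (4 * m) × ZMod p) := by
      obtain ⟨b', hb'⟩ := isUnit_iff_exists_inv.mp hbu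
      obtain ⟨c', hc'⟩ := isUnit_iff_exists_inv.mp hcu
      exact isUnit_iff_exists_inv.mpr ⟨(b', c'), by
        rw [Prod.mk_mul_mk, hb', hc']; rfl⟩
    set A : ZMod (4 * m * p) := φ.symm (b, c) with hA
    have hAu : IsUnit A := hABu.map φ.symm
    obtain ⟨q, hq_gt, hq_prime, hq_mod⟩ :=
      Nat.forall_exists_prime_gt_and_eq_mod hAu (6 * m * p + 3)
    have hProd : ((q : ℕ) : ZMod (4 * m) × ZMod p) = (b, c) := by
      calc ((q : ℕ) : ZMod (4 * m) × ZMod p)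
          = φ ((q : ℕ) : ZMod (4 * m * p)) := (map_natCast φ q).symm
        _ = φ A := by rw [hq_mod]
        _ = (b, c) := φ.apply_symm_apply _
    have hq4m : (q : ZMod (4 * m)) = b := by
      have := congrArg (RingHom.fst (ZMod (4 * m)) (ZMod p)) hProd
      simpa using this
    have hqp : (q : ZMod p) = c := by
      have := congrArg (RingHom.snd (ZMod (4 * m)) (ZMod p)) hProd
      simpa using this
    have hq4 : (q : ZMod 4) = 1 := by
      have h1 := congrArg (ZMod.castHom (dvd_mul_right 4 m) (ZMod 4)) hq4m
      rw [map_natCast] at h1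
      rw [hb, map_intCast] at h1
      rw [h1, he4]
    have hqm : (q : ZMod m) = x ∨ (q : ZMod m) = -x := by
      have h1 := congrArg (ZMod.castHom (dvd_mul_left m 4) (ZMod m)) hq4m
      rw [map_natCast] at h1
      rw [hb, map_intCast] at h1
      rcases hem with h | h
      · left; rw [h1, h, hxu]
      · right; rw [h1, h, hxu]
    have hq4' : q % 4 = 1 := by
      have h1 : (q : ZMod 4) = ((1 : ℕ) : ZMod 4) := by rw [hq4]; norm_num
      have := (ZMod.natCast_eq_natCast_iff' q 1 4).mp h1
      omega
    haveI : Fact q.Prime := ⟨hq_prime⟩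
    obtain ⟨T, S, hTS⟩ := Nat.Prime.sq_add_sq (p := q) (by omega)
    set d : ℕ := T ^ 2 + p ^ 2 * S ^ 2 with hd
    -- coprimality helper
    have key : ∀ n : ℕ, n.Prime → ((d : ZMod n) ≠ 0) → d.Coprime n := by
      intro n hn h0
      haveI : NeZero n := ⟨hn.pos.ne'⟩
      exact Nat.coprime_comm.mp ((hn.coprime_iff_not_dvd).mpr
        (fun hdd => h0 ((ZMod.natCast_eq_zero_iff d n).mpr hdd)))
    have hq3 : ¬ (3 ∣ q) := by
      intro h3
      have := (Nat.Prime.eq_one_or_self_of_dvd hq_prime 3 h3)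
      omega
    have hq2 : ¬ (2 ∣ q) := by omega
    -- p ∤ T
    have hTp : (T : ZMod p) ≠ 0 := by
      intro h0
      apply hc
      refine ⟨(S : ZMod p), ?_⟩
      rw [← hqp, ← hTS]
      push_cast
      rw [h0]
      ring
    have cop_p : d.Coprime p := by
      apply key p hp
      rw [hd]
      push_cast
      rw [ZMod.natCast_self]
      simpa using pow_ne_zero 2 hTp
    have cop_2 : d.Coprime 2 := by
      apply key 2 Nat.prime_two
      have hp21 : (p : ZMod 2) = 1 := by
        have : p % 2 = 1 := Nat.odd_iff.mp hodd
        rw [← ZMod.natCast_mod p 2, this]; norm_num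
      have hq21 : ((q : ℕ) : ZMod 2) ≠ 0 :=
        fun h0 => hq2 ((ZMod.natCast_eq_zero_iff q 2).mp h0)
      rw [hd]
      push_cast
      rw [hp21, one_pow, one_mul]
      rw [← hTS] at hq21
      push_cast at hq21
      exact hq21
    have cop_3 : d.Coprime 3 := by
      by_cases hp3' : p = 3
      · rw [← hp3']; exact cop_p
      · apply key 3 Nat.prime_three
        have hp31 : ((p : ZMod 3)) ^ 2 = 1 := by
          have hpd : ¬ (3 ∣ p) := fun h3 => hp3' ((Nat.prime_dvd_prime_iff_eq Nat.prime_three hp).mp h3).symm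
          have h0 : (p : ZMod 3) ≠ 0 :=
            fun h0 => hpd ((ZMod.natCast_eq_zero_iff p 3).mp h0)
          revert h0; generalize (p : ZMod 3) = z; revert z; decide
        have hq31 : ((q : ℕ) : ZMod 3) ≠ 0 :=
          fun h0 => hq3 ((ZMod.natCast_eq_zero_iff q 3).mp h0)
        rw [hd]
        push_cast
        rw [hp31, one_mul]
        rw [← hTS] at hq31
        push_cast at hq31
        exact hq31
    have cop_m : d.Coprime m := by
      rw [← ZMod.isUnit_iff_coprime]
      have hdm : ((d : ℕ) : ZMod m) = ((q : ℕ) : ZMod m) := by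
        rw [hd, ← hTS]
        push_cast
        rw [hpm1]
        ring
      rw [hdm]
      rcases hqm with h | h
      · rw [h]; exact hx
      · rw [h]; exact hx.neg
    have copall : d.Coprime (6 * m * p) := by
      have : d.Coprime (2 * (3 * (m * p))) :=
        Nat.Coprime.mul_right cop_2
          (Nat.Coprime.mul_right cop_3 (Nat.Coprime.mul_right cop_m cop_p))
      have he : 6 * m * p = 2 * (3 * (m * p)) := by ring
      rw [he]
      exact this
    refine ⟨(T : ℤ), (S : ℤ), ?_, ?_⟩
    · have h1 : ((T : ℤ) ^ 2 + (p : ℤ) ^ 2 * (S : ℤ) ^ 2) = ((d : ℕ) : ℤ) := by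
        rw [hd]; push_cast; ring
      have h2 : ((6 : ℤ) * m * p) = ((6 * m * p : ℕ) : ℤ) := by push_cast; ring
      rw [h1, h2, Int.gcd_natCast_natCast]
      exact copall
    · have hcast : (((T : ℤ) ^ 2 + (S : ℤ) ^ 2 : ℤ) : ZMod m) = ((q : ℕ) : ZMod m) := by
        rw [← hTS]; push_cast; ring
      rcases hqm with h | h
      · left; rw [hcast, h]
      · right; rw [hcast, h, neg_neg]
  · -- backward direction
    rintro ⟨t, s, hg, hx⟩
    have h1 : IsCoprime (t ^ 2 + (p:ℤ) ^ 2 * s ^ 2) ((6 : ℤ) * m * p) :=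
      Int.isCoprime_iff_gcd_eq_one.mpr hg
    have hcopm : IsCoprime (t ^ 2 + (p:ℤ) ^ 2 * s ^ 2) ((m : ℤ)) :=
      h1.of_isCoprime_of_dvd_right ⟨6 * p, by ring⟩
    obtain ⟨a, b, hab⟩ := hcopm
    have hunit : IsUnit (((t ^ 2 + (p:ℤ) ^ 2 * s ^ 2 : ℤ)) : ZMod m) := by
      apply IsUnit.of_mul_eq_one ((a : ZMod m))
      have h2 := congrArg (fun z : ℤ => ((z : ZMod m))) hab
      push_cast at h2
      rw [ZMod.natCast_self] at h2
      rw [mul_zero, add_zero] at h2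
      rw [mul_comm] at h2
      convert h2 using 2 <;> push_cast <;> ring
    have hX : (((t ^ 2 + (p:ℤ) ^ 2 * s ^ 2 : ℤ)) : ZMod m)
        = ((t ^ 2 + s ^ 2 : ℤ) : ZMod m) := by
      push_cast
      rw [hpm1]
      ring
    rw [hX] at hunit
    rcases hx with rfl | rfl
    · exact hunit
    · exact hunit.neg
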